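/- arXiv:2109.07052 — 8 statements merged into one kernel-verified Lean document; each statement's English description precedes it below -/
import Mathlib

section
/- Let $X = \{x_1,\dots,x_m\} \subseteq H_n$ be a finite subset of the Hamming cube, let $h = (1/2,\dots,1/2) \in \mathbb{R}^n$, and let $\alpha_1,\dots,\alpha_m$ be reals with $\sum_i \alpha_i = 1$. Then $\sum_{i,j=1}^m \alpha_i \alpha_j \|x_i - x_j\|_1 = \frac{n}{2} - 2 \|\sum_{i=1}^m \alpha_i x_i - h\|_2^2$. -/
open Finset

theorem stmt_5 {m n : ℕ} (x : Fin m → EuclideanSpace ℝ (Fin n))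
    (hx : ∀ i j, x i j = 0 ∨ x i j = 1)
    (h : EuclideanSpace ℝ (Fin n)) (hh : ∀ j, h j = 1 / 2)
    (α : Fin m → ℝ) (hα : ∑ i, α i = 1) :
    ∑ i, ∑ j, α i * α j * (∑ t, |x i t - x j t|) =
      n / 2 - 2 * ‖(∑ i, α i • x i) - h‖ ^ 2 := by
  set s : Fin n → ℝ := fun t => ∑ i, α i * x i t with hs
  set F : Fin m → Fin m → Fin n → ℝ :=
    fun i j t => α i * α j * (x i t + x j t - 2 * (x i t * x j t)) with hF
  have habs : ∀ i j t, |x i t - x j t| = x i t + x j t - 2 * (x i t * x j t) := by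
    intro i j t
    rcases hx i t with h1 | h1 <;> rcases hx j t with h2 | h2 <;>
      rw [h1, h2] <;> norm_num
  have key : ∀ t, ∑ i, ∑ j, F i j t = 2 * s t - 2 * (s t)^2 := by
    intro t
    have e1 : ∀ i j : Fin m, F i j t =
        (α i * x i t) * α j + α i * (α j * x j t) -
          2 * ((α i * x i t) * (α j * x j t)) := fun i j => by
      show α i * α j * (x i t + x j t - 2 * (x i t * x j t)) = _; ring
    simp only [e1, Finset.sum_sub_distrib, Finset.sum_add_distrib, ← Finset.sum_mul,
      ← Finset.mul_sum, hα]
    ring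
  have hLHS : ∑ i, ∑ j, α i * α j * (∑ t, |x i t - x j t|)
      = ∑ t, (2 * s t - 2 * (s t)^2) := by
    have e2 : ∀ i j, α i * α j * (∑ t, |x i t - x j t|) = ∑ t, F i j t := by
      intro i j
      rw [Finset.mul_sum]
      exact Finset.sum_congr rfl fun t _ => by rw [habs, hF]
    simp_rw [e2]
    calc ∑ i, ∑ j, ∑ t, F i j t
        = ∑ i, ∑ t, ∑ j, F i j t := Finset.sum_congr rfl (fun i _ => Finset.sum_comm)
      _ = ∑ t, ∑ i, ∑ j, F i j t := Finset.sum_comm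
      _ = ∑ t, (2 * s t - 2 * (s t)^2) := Finset.sum_congr rfl (fun t _ => key t)
  have hnorm : ‖(∑ i, α i • x i) - h‖ ^ 2 = ∑ t, (s t - 1/2)^2 := by
    rw [EuclideanSpace.norm_eq, Real.sq_sqrt (by positivity)]
    refine Finset.sum_congr rfl fun t _ => ?_
    have : ((∑ i, α i • x i) - h) t = s t - 1/2 := by
      have hsum : (∑ i, α i • x i) t = ∑ i, (α i • x i) t :=
        by rw [WithLp.ofLp_sum, Finset.sum_apply]
      simp [hh, hs, hsum]
    rw [this, Real.norm_eq_abs, sq_abs]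
  rw [hLHS, hnorm]
  have : (2:ℝ) * ∑ t, (s t - 1/2)^2 = ∑ t, (2 * (s t)^2 - 2 * s t + 1/2) := by
    rw [Finset.mul_sum]; exact Finset.sum_congr rfl fun t _ => by ring
  rw [this]
  simp [Finset.sum_add_distrib, Finset.sum_sub_distrib]
  ring
end

section
/- Let $X = \{x_1,\dots,x_m\} \subseteq H_n$. Then the supremum of $\sum_{i,j=1}^m \alpha_i \alpha_j d_1(x_i,x_j)$ over all real $\alpha_1,\dots,\alpha_m$ with $\sum_i \alpha_i = 1$ is at most $n/2$. -/
open Finset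

theorem stmt_6 {m n : ℕ} (x : Fin m → EuclideanSpace ℝ (Fin n))
    (hx : ∀ i j, x i j = 0 ∨ x i j = 1) :
    sSup {v : ℝ | ∃ α : Fin m → ℝ, ∑ i, α i = 1 ∧
        v = ∑ i, ∑ j, α i * α j * (∑ t, |x i t - x j t|)} ≤ n / 2 := by
  apply Real.sSup_le
  · rintro v ⟨α, hα, rfl⟩
    have key : ∀ t : Fin n, ∑ i, ∑ j, α i * α j * |x i t - x j t| ≤ 1 / 2 := by
      intro t
      set a : Fin m → ℝ := fun i => x i t with ha
      have habs : ∀ i j, |a i - a j| = a i + a j - 2 * (a i * a j) := by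
        intro i j
        rcases hx i t with h1 | h1 <;> rcases hx j t with h2 | h2 <;>
          simp [ha, h1, h2] <;> norm_num
      set S : ℝ := ∑ i, α i * a i with hS
      have inner : ∀ i, ∑ j, α i * α j * |a i - a j|
          = α i * a i * (∑ j, α j) + α i * S - 2 * (α i * a i) * S := by
        intro i
        simp only [habs, hS, Finset.mul_sum, ← Finset.sum_add_distrib,
          ← Finset.sum_sub_distrib]
        exact Finset.sum_congr rfl fun j _ => by ring
      have total : ∑ i, ∑ j, α i * α j * |a i - a j| = 2 * S - 2 * S ^ 2 := by
        simp only [inner, hα, mul_one]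
        rw [Finset.sum_sub_distrib, Finset.sum_add_distrib]
        have h1 : ∑ i, 2 * (α i * a i) = 2 * S := by rw [hS, Finset.mul_sum]
        rw [← Finset.sum_mul, ← Finset.sum_mul, h1, hα, ← hS]
        ring
      rw [total]
      nlinarith [sq_nonneg (S - 1 / 2)]
    have swap : ∑ i, ∑ j, α i * α j * (∑ t, |x i t - x j t|)
        = ∑ t : Fin n, ∑ i, ∑ j, α i * α j * |x i t - x j t| := by
      simp only [Finset.mul_sum]
      rw [Finset.sum_congr rfl fun i (_ : i ∈ Finset.univ) =>
        (Finset.sum_comm : ∑ j : Fin m, ∑ t : Fin n, α i * α j * |x i t - x j t| = _)]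
      exact Finset.sum_comm
    rw [swap]
    calc ∑ t : Fin n, ∑ i, ∑ j, α i * α j * |x i t - x j t|
        ≤ ∑ _t : Fin n, (1 / 2 : ℝ) := Finset.sum_le_sum fun t _ => key t
      _ = n / 2 := by simp; ring
  · positivity
end

section
/- Let $X = \{x_1,\dots,x_m\} \subseteq H_n$ and let $h = (1/2,\dots,1/2) \in \mathbb{R}^n$. Then $M(X) = \frac{n}{2} - 2\, d_2(h, Z_X)^2$, where $M(X) = \sup\{\sum_{i,j} \alpha_i \alpha_j d_1(x_i,x_j) : \sum_i \alpha_i = 1\}$, $Z_X$ is the affine hull of $\{x_1,\dots,x_m\}$ in $\mathbb{R}^n$, and $d_2(h, Z_X)$ is the Euclidean distance from $h$ to $Z_X$. -/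
open Finset

lemma coord_sum {m : ℕ} (α a : Fin m → ℝ) (hα : ∑ i, α i = 1) (ha : ∀ i, a i = 0 ∨ a i = 1) :
    ∑ i, ∑ j, α i * α j * |a i - a j| = 1/2 - 2 * (∑ i, α i * a i - 1/2)^2 := by
  have habs : ∀ i j : Fin m, α i * α j * |a i - a j| =
      α i * a i * α j + α i * (α j * a j) - 2 * ((α i * a i) * (α j * a j)) := by
    intro i j
    rcases ha i with h1|h1 <;> rcases ha j with h2|h2 <;> rw [h1, h2] <;> norm_num <;> ring
  simp only [habs, Finset.sum_sub_distrib, Finset.sum_add_distrib, ← Finset.sum_mul,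
    ← Finset.mul_sum, hα]
  ring

lemma key_val {m n : ℕ} (x : Fin m → EuclideanSpace ℝ (Fin n))
    (hx : ∀ i j, x i j = 0 ∨ x i j = 1) (h : EuclideanSpace ℝ (Fin n)) (hh : ∀ j, h j = 1/2)
    (α : Fin m → ℝ) (hα : ∑ i, α i = 1) :
    ∑ i, ∑ j, α i * α j * (∑ t, |x i t - x j t|)
      = n / 2 - 2 * dist h (Finset.univ.affineCombination ℝ x α) ^ 2 := by
  set P : EuclideanSpace ℝ (Fin n) := Finset.univ.affineCombination ℝ x α with hP
  have hPt : ∀ t, P t = ∑ i, α i * x i t := by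
    intro t
    rw [hP, Finset.affineCombination_eq_linear_combination _ _ _ hα]
    rw [WithLp.ofLp_sum, Finset.sum_apply]
    simp [smul_eq_mul]
  have hdist : dist h P ^ 2 = ∑ t, (P t - 1/2)^2 := by
    rw [EuclideanSpace.dist_eq, Real.sq_sqrt (by positivity)]
    congr 1; funext t
    rw [Real.dist_eq, sq_abs, hh t]
    ring
  have hswap : ∑ i, ∑ j, α i * α j * (∑ t, |x i t - x j t|)
      = ∑ t, ∑ i, ∑ j, α i * α j * |x i t - x j t| := by
    simp only [Finset.mul_sum]
    calc ∑ i, ∑ j, ∑ t, α i * α j * |x i t - x j t|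
        = ∑ i, ∑ t, ∑ j, α i * α j * |x i t - x j t| :=
          Finset.sum_congr rfl (fun i _ => Finset.sum_comm)
      _ = ∑ t, ∑ i, ∑ j, α i * α j * |x i t - x j t| := Finset.sum_comm
  rw [hswap, hdist]
  have : ∀ t : Fin n, ∑ i, ∑ j, α i * α j * |x i t - x j t|
      = 1/2 - 2 * ((P t) - 1/2)^2 := by
    intro t
    rw [hPt t]
    exact coord_sum α (fun i => x i t) hα (fun i => hx i t)
  simp only [this, Finset.sum_sub_distrib, Finset.sum_const, Finset.card_univ, Fintype.card_fin,
    ← Finset.mul_sum]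
  push_cast
  ring

theorem stmt_7 {m n : ℕ} (hm : 0 < m) (x : Fin m → EuclideanSpace ℝ (Fin n))
    (hx : ∀ i j, x i j = 0 ∨ x i j = 1)
    (h : EuclideanSpace ℝ (Fin n)) (hh : ∀ j, h j = 1 / 2) :
    sSup {v : ℝ | ∃ α : Fin m → ℝ, ∑ i, α i = 1 ∧
        v = ∑ i, ∑ j, α i * α j * (∑ t, |x i t - x j t|)} =
      n / 2 - 2 * (Metric.infDist h (affineSpan ℝ (Set.range x) : Set (EuclideanSpace ℝ (Fin n)))) ^ 2 := by
  set A : Set (EuclideanSpace ℝ (Fin n)) := ↑(affineSpan ℝ (Set.range x)) with hA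
  have hAne : A.Nonempty := ⟨x ⟨0, hm⟩, subset_affineSpan ℝ _ (Set.mem_range_self _)⟩
  have hAcl : IsClosed A := by
    rw [hA]; exact AffineSubspace.closed_of_finiteDimensional (affineSpan ℝ (Set.range x))
  obtain ⟨y, hyA, hyd⟩ := hAcl.exists_infDist_eq_dist hAne h
  refine IsGreatest.csSup_eq ⟨?_, ?_⟩
  · -- membership: the value is attained
    obtain ⟨α, hα, hyc⟩ := eq_affineCombination_of_mem_affineSpan_of_fintype hyA
    refine ⟨α, hα, ?_⟩
    rw [key_val x hx h hh α hα, ← hyc, ← hyd]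
  · -- upper bound
    rintro v ⟨α, hα, rfl⟩
    rw [key_val x hx h hh α hα]
    have hmem : Finset.univ.affineCombination ℝ x α ∈ A :=
      affineCombination_mem_affineSpan hα x
    have h1 : Metric.infDist h A ≤ dist h (Finset.univ.affineCombination ℝ x α) :=
      Metric.infDist_le_dist_of_mem hmem
    have h0 : 0 ≤ Metric.infDist h A := Metric.infDist_nonneg
    nlinarith [sq_nonneg (dist h (Finset.univ.affineCombination ℝ x α) - Metric.infDist h A)]
end

section
/- Let $X \subseteq H_n$ be a finite subset of the Hamming cube with at least two points. Then $M(X) = n/2$ if and only if the point $h = (1/2,\dots,1/2)$ lies in the affine hull of $X$ in $\mathbb{R}^n$. -/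
open Finset

theorem stmt_8 {m n : ℕ} (hm : 2 ≤ m) (x : Fin m → EuclideanSpace ℝ (Fin n))
    (hinj : Function.Injective x)
    (hx : ∀ i j, x i j = 0 ∨ x i j = 1)
    (h : EuclideanSpace ℝ (Fin n)) (hh : ∀ j, h j = 1 / 2) :
    sSup {v : ℝ | ∃ α : Fin m → ℝ, ∑ i, α i = 1 ∧
        v = ∑ i, ∑ j, α i * α j * (∑ t, |x i t - x j t|)} = n / 2 ↔
      h ∈ affineSpan ℝ (Set.range x) := by
  classical
  set S : Set ℝ := {v : ℝ | ∃ α : Fin m → ℝ, ∑ i, α i = 1 ∧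
      v = ∑ i, ∑ j, α i * α j * (∑ t, |x i t - x j t|)} with hS
  -- key algebraic identity
  have key : ∀ α : Fin m → ℝ, ∑ i, α i = 1 →
      ∑ i, ∑ j, α i * α j * (∑ t, |x i t - x j t|)
        = (n : ℝ) / 2 - 2 * ∑ t, ((∑ i, α i * x i t) - 1/2)^2 := by
    intro α hα
    have habs : ∀ i j t, |x i t - x j t| = x i t + x j t - 2 * (x i t * x j t) := by
      intro i j t
      rcases hx i t with h1 | h1 <;> rcases hx j t with h2 | h2 <;>
        rw [h1, h2] <;> norm_num
    have step1 : ∑ i, ∑ j, α i * α j * (∑ t, |x i t - x j t|)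
        = ∑ t, ∑ i, ∑ j, (α i * α j * (x i t + x j t - 2 * (x i t * x j t))) := by
      have e1 : ∀ i j : Fin m, α i * α j * (∑ t, |x i t - x j t|)
          = ∑ t, (α i * α j * (x i t + x j t - 2 * (x i t * x j t))) := by
        intro i j
        rw [Finset.mul_sum]
        exact Finset.sum_congr rfl fun t _ => by rw [habs]
      calc ∑ i, ∑ j, α i * α j * (∑ t, |x i t - x j t|)
          = ∑ i, ∑ j, ∑ t, (α i * α j * (x i t + x j t - 2 * (x i t * x j t))) :=
            Finset.sum_congr rfl fun i _ => Finset.sum_congr rfl fun j _ => e1 i j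
        _ = ∑ i, ∑ t, ∑ j, (α i * α j * (x i t + x j t - 2 * (x i t * x j t))) :=
            Finset.sum_congr rfl fun i _ => Finset.sum_comm
        _ = ∑ t, ∑ i, ∑ j, (α i * α j * (x i t + x j t - 2 * (x i t * x j t))) :=
            Finset.sum_comm
    rw [step1]
    have pert : ∀ t : Fin n,
        ∑ i, ∑ j, (α i * α j * (x i t + x j t - 2 * (x i t * x j t)))
          = 1/2 - 2 * ((∑ i, α i * x i t) - 1/2)^2 := by
      intro t
      set Y := ∑ i, α i * x i t with hY
      have inner : ∀ i, ∑ j, (α i * α j * (x i t + x j t - 2 * (x i t * x j t)))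
          = (α i * x i t) * 1 + (α i * (1 - 2 * x i t)) * Y := by
        intro i
        have e : ∀ j, α i * α j * (x i t + x j t - 2 * (x i t * x j t))
            = (α i * x i t) * α j + (α i * (1 - 2 * x i t)) * (α j * x j t) := by
          intro j; ring
        rw [Finset.sum_congr rfl fun j _ => e j, Finset.sum_add_distrib,
          ← Finset.mul_sum, ← Finset.mul_sum, hα, ← hY]
      have outer : ∀ i, (α i * x i t) * 1 + (α i * (1 - 2 * x i t)) * Y
          = (1 + Y * (-2)) * (α i * x i t) + Y * α i := fun i => by ring
      rw [Finset.sum_congr rfl fun i _ => (inner i).trans (outer i),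
        Finset.sum_add_distrib, ← Finset.mul_sum, ← Finset.mul_sum, hα, ← hY]
      ring
    rw [Finset.sum_congr rfl fun t _ => pert t]
    rw [Finset.sum_sub_distrib, ← Finset.mul_sum, Finset.sum_const, Finset.card_univ,
      Fintype.card_fin, nsmul_eq_mul]
    ring
  have hcoord : ∀ (α : Fin m → ℝ), ∀ t, (∑ i, α i • x i) t = ∑ i, α i * x i t := by
    intro α t
    rw [WithLp.ofLp_sum, Finset.sum_apply]; rfl
  have hdist : ∀ (α : Fin m → ℝ),
      ∑ t, ((∑ i, α i * x i t) - 1/2)^2 = dist h (∑ i, α i • x i) ^ 2 := by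
    intro α
    rw [EuclideanSpace.dist_eq, Real.sq_sqrt (by positivity)]
    refine Finset.sum_congr rfl fun t _ => ?_
    rw [hcoord, Real.dist_eq, sq_abs, hh]
    ring
  have hmem : ∀ (α : Fin m → ℝ), ∑ i, α i = 1 →
      (∑ i, α i • x i) ∈ affineSpan ℝ (Set.range x) := by
    intro α hα
    have := affineCombination_mem_affineSpan (s := Finset.univ) (w := α) (by simpa using hα) x
    rwa [Finset.univ.affineCombination_eq_linear_combination x α (by simpa using hα)] at this
  have i0 : Fin m := ⟨0, by omega⟩
  have hSne : S.Nonempty := by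
    refine ⟨_, fun i => if i = i0 then 1 else 0, by simp, rfl⟩
  have hub : ∀ v ∈ S, v ≤ (n : ℝ) / 2 := by
    rintro v ⟨α, hα, rfl⟩
    rw [key α hα]
    nlinarith [Finset.sum_nonneg (s := (Finset.univ : Finset (Fin n)))
      (f := fun t => ((∑ i, α i * x i t) - 1/2)^2) (fun t _ => sq_nonneg _)]
  constructor
  · intro hsup
    by_contra hnot
    have hclosed : IsClosed ((affineSpan ℝ (Set.range x) : AffineSubspace ℝ _) : Set (EuclideanSpace ℝ (Fin n))) :=
      AffineSubspace.closed_of_finiteDimensional _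
    have hspanne : ((affineSpan ℝ (Set.range x) : AffineSubspace ℝ _) : Set (EuclideanSpace ℝ (Fin n))).Nonempty :=
      ⟨x i0, subset_affineSpan ℝ _ ⟨i0, rfl⟩⟩
    have hd : 0 < Metric.infDist h ((affineSpan ℝ (Set.range x) : AffineSubspace ℝ _) : Set (EuclideanSpace ℝ (Fin n))) :=
      (hclosed.notMem_iff_infDist_pos hspanne).1 hnot
    set d := Metric.infDist h ((affineSpan ℝ (Set.range x) : AffineSubspace ℝ _) : Set (EuclideanSpace ℝ (Fin n))) with hdd
    have hub2 : ∀ v ∈ S, v ≤ (n : ℝ) / 2 - 2 * d ^ 2 := by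
      rintro v ⟨α, hα, rfl⟩
      rw [key α hα, hdist α]
      have hge : d ≤ dist h (∑ i, α i • x i) :=
        Metric.infDist_le_dist_of_mem (hmem α hα)
      nlinarith [hd, dist_nonneg (x := h) (y := ∑ i, α i • x i)]
    have := csSup_le hSne hub2
    rw [hsup] at this
    nlinarith
  · intro hmemh
    obtain ⟨w, hw, hwh⟩ := eq_affineCombination_of_mem_affineSpan_of_fintype hmemh
    rw [Finset.univ.affineCombination_eq_linear_combination x w hw] at hwh
    have hval : ((n : ℝ) / 2) ∈ S := by
      refine ⟨w, hw, ?_⟩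
      rw [key w hw, hdist w, ← hwh, dist_self]
      ring
    exact le_antisymm (csSup_le hSne hub) (le_csSup ⟨(n : ℝ)/2, hub⟩ hval)
end

section
/- Let $X = \{x_1,\dots,x_m\} \subseteq H_n$ ($m \ge 2$) be affinely independent with distance matrix $D = (d_1(x_i,x_j))_{i,j}$. Then $\langle D^{-1}\mathbf{1}, \mathbf{1}\rangle = \left(\frac{n}{2} - 2\, d_2(h, Z_X)^2\right)^{-1}$, where $h = (1/2,\dots,1/2)$, $Z_X$ is the affine hull of $X$ in $\mathbb{R}^n$, and $\mathbf{1} = (1,\dots,1)^T$. -/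
open Finset
open scoped RealInnerProductSpace
open Matrix

theorem stmt_9 {m n : ℕ} (hm : 2 ≤ m) (x : Fin m → EuclideanSpace ℝ (Fin n))
    (hx : ∀ i j, x i j = 0 ∨ x i j = 1)
    (hind : AffineIndependent ℝ x)
    (h : EuclideanSpace ℝ (Fin n)) (hh : ∀ j, h j = 1 / 2)
    (D : Matrix (Fin m) (Fin m) ℝ) (hD : ∀ i j, D i j = ∑ t, |x i t - x j t|) :
    ∑ i, ∑ j, D⁻¹ i j =
      (n / 2 - 2 * (Metric.infDist h
        (affineSpan ℝ (Set.range x) : Set (EuclideanSpace ℝ (Fin n)))) ^ 2)⁻¹ := by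
  classical
  set S := affineSpan ℝ (Set.range x) with hS
  haveI : Nonempty S := ⟨⟨x ⟨0, by omega⟩, subset_affineSpan ℝ _ ⟨_, rfl⟩⟩⟩
  set q : EuclideanSpace ℝ (Fin n) :=
    (EuclideanGeometry.orthogonalProjection S h : EuclideanSpace ℝ (Fin n)) with hqdef
  have hqS : q ∈ S := (EuclideanGeometry.orthogonalProjection S h).2
  have horth : h - q ∈ S.directionᗮ := by
    have := EuclideanGeometry.vsub_orthogonalProjection_mem_direction_orthogonal S h
    simpa [vsub_eq_sub] using this
  have hdir : ∀ i, x i - q ∈ S.direction := fun i => by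
    have := AffineSubspace.vsub_mem_direction
      (subset_affineSpan ℝ _ (Set.mem_range_self i)) hqS
    simpa [vsub_eq_sub] using this
  set d : ℝ := dist h q with hd
  set r2 : ℝ := (n : ℝ) / 4 - d ^ 2 with hr2
  -- coordinate fact : ⟪x i - h, x i - h⟫ = n/4
  have hnh : ∀ i, ⟪x i - h, x i - h⟫ = (n : ℝ) / 4 := by
    intro i
    rw [PiLp.inner_apply]
    have : ∀ t, ⟪(x i - h) t, (x i - h) t⟫ = 1 / 4 := by
      intro t
      have hxt := hx i t
      have hht := hh t
      simp only [PiLp.sub_apply, RCLike.inner_apply, conj_trivial]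
      rcases hxt with h0 | h0 <;> rw [h0, hht] <;> norm_num
    rw [Finset.sum_congr rfl fun t _ => this t]
    simp
    ring
  -- Pythagoras : ⟪x i - q, x i - q⟫ = r2
  have hnq : ∀ i, ⟪x i - q, x i - q⟫ = r2 := by
    intro i
    have hcross : ⟪x i - q, h - q⟫ = 0 := by
      have := (Submodule.mem_orthogonal S.direction (h - q)).mp horth (x i - q) (hdir i)
      simpa [real_inner_comm] using this
    have hsplit : x i - h = (x i - q) - (h - q) := by abel
    have := hnh i
    rw [hsplit] at this
    rw [inner_sub_sub_self] at this
    have hdq : ⟪h - q, h - q⟫ = d ^ 2 := by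
      rw [real_inner_self_eq_norm_sq, hd, dist_eq_norm]
    have hcross2 : ⟪h - q, x i - q⟫ = 0 := by rw [real_inner_comm]; exact hcross
    rw [hcross, hcross2, hdq] at this
    rw [hr2]
    linarith
  -- D entries
  have hDij : ∀ i j, D i j = 2 * r2 - 2 * ⟪x i - q, x j - q⟫ := by
    intro i j
    have habs : ∀ t, |x i t - x j t| = (x i t - x j t) * (x i t - x j t) := by
      intro t
      rcases hx i t with h0 | h0 <;> rcases hx j t with h1 | h1 <;>
        rw [h0, h1] <;> norm_num
    have h1 : D i j = ⟪x i - x j, x i - x j⟫ := by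
      rw [hD, PiLp.inner_apply]
      refine Finset.sum_congr rfl fun t _ => ?_
      simp only [PiLp.sub_apply, RCLike.inner_apply, conj_trivial]
      exact habs t
    have hsplit : x i - x j = (x i - q) - (x j - q) := by abel
    rw [h1, hsplit, inner_sub_sub_self, hnq i, hnq j, real_inner_comm]
    ring
  -- r2 > 0
  have hi0 : (⟨0, by omega⟩ : Fin m) ≠ ⟨1, by omega⟩ := by simp
  have hx01 : x ⟨0, by omega⟩ ≠ x ⟨1, by omega⟩ := fun hcon => hi0 (hind.injective hcon)
  have hr2pos : 0 < r2 := by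
    have h0 := hnq ⟨0, by omega⟩
    have h1 := hnq ⟨1, by omega⟩
    rcases lt_or_eq_of_le (real_inner_self_nonneg (x := x ⟨0, by omega⟩ - q)) with hlt | heq
    · rw [h0] at hlt; exact hlt
    · exfalso
      have e0 : x ⟨0, by omega⟩ - q = 0 := by
        have := inner_self_eq_zero (𝕜 := ℝ) (x := x ⟨0, by omega⟩ - q)
        exact this.mp heq.symm
      rw [← h0] at h1
      have e1 : x ⟨1, by omega⟩ - q = 0 := by
        rw [heq.symm] at h1
        exact inner_self_eq_zero.mp h1
      apply hx01
      have := sub_eq_zero.mp e0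
      rw [this, ← sub_eq_zero.mp e1]
  -- Key lemma
  have key : ∀ (w : Fin m → ℝ) (β : ℝ), (D *ᵥ w) = (fun _ => β) →
      2 * r2 * (∑ i, w i) = β ∧ (∑ i, w i • (x i - q)) = 0 := by
    intro w β hw
    set v : EuclideanSpace ℝ (Fin n) := ∑ i, w i • (x i - q) with hv
    have hinner : ∀ i, ⟪x i - q, v⟫ = (2 * r2 * (∑ j, w j) - β) / 2 := by
      intro i
      have h1 : (D *ᵥ w) i = β := by rw [hw]
      have h2 : (D *ᵥ w) i = ∑ j, (2 * r2 - 2 * ⟪x i - q, x j - q⟫) * w j := by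
        rw [Matrix.mulVec, dotProduct]
        exact Finset.sum_congr rfl fun j _ => by rw [hDij i j]
      have h3 : ⟪x i - q, v⟫ = ∑ j, w j * ⟪x i - q, x j - q⟫ := by
        rw [hv, inner_sum]
        exact Finset.sum_congr rfl fun j _ => by rw [real_inner_smul_right]
      rw [h2] at h1
      have h4 : ∑ j, (2 * r2 - 2 * ⟪x i - q, x j - q⟫) * w j
          = 2 * r2 * (∑ j, w j) - 2 * (∑ j, w j * ⟪x i - q, x j - q⟫) := by
        rw [Finset.mul_sum, Finset.mul_sum, ← Finset.sum_sub_distrib]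
        exact Finset.sum_congr rfl fun j _ => by ring
      rw [h4] at h1
      rw [h3]
      linear_combination (-1/2 : ℝ) * h1
    have hvdir : v ∈ S.direction := by
      rw [hv]
      exact Submodule.sum_mem _ fun i _ => Submodule.smul_mem _ _ (hdir i)
    have hvorth : ∀ u ∈ S.direction, ⟪u, v⟫ = 0 := by
      intro u hu
      have hdirspan : S.direction = Submodule.span ℝ (Set.range x -ᵥ Set.range x) := by
        rw [hS, direction_affineSpan, vectorSpan_def]
      rw [hdirspan] at hu
      induction hu using Submodule.span_induction with
      | mem u hu =>
        obtain ⟨a, ⟨i, rfl⟩, b, ⟨j, rfl⟩, rfl⟩ := hu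
        have heq : (fun x1 x2 => x1 -ᵥ x2) (x i) (x j) = (x i - q) - (x j - q) := by
          show x i -ᵥ x j = _
          rw [vsub_eq_sub]; abel
        rw [heq, inner_sub_left, hinner i, hinner j]
        ring
      | zero => simp
      | add a b _ _ ha hb => rw [inner_add_left, ha, hb]; ring
      | smul c a _ ha => rw [real_inner_smul_left, ha]; ring
    have hv0 : v = 0 := by
      have := hvorth v hvdir
      exact inner_self_eq_zero.mp this
    have hc : ⟪x ⟨0, by omega⟩ - q, v⟫ = 0 := by rw [hv0, inner_zero_right]
    rw [hinner ⟨0, by omega⟩] at hc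
    refine ⟨by linear_combination (2 : ℝ) * hc, hv0⟩
  -- D is invertible
  have hdet : D.det ≠ 0 := by
    intro hdet0
    obtain ⟨w, hwne, hw0⟩ := (Matrix.exists_mulVec_eq_zero_iff).mpr hdet0
    have hw0' : (D *ᵥ w) = (fun _ => (0 : ℝ)) := by
      funext i; rw [hw0]; rfl
    obtain ⟨hsum, hv0⟩ := key w 0 hw0'
    have hW : ∑ i, w i = 0 := by
      rcases mul_eq_zero.mp hsum with h' | h'
      · exfalso; linarith
      · exact h'
    have hlin : ∑ i, w i • x i = 0 := by
      have : ∑ i, w i • (x i - q) = (∑ i, w i • x i) - (∑ i, w i) • q := by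
        rw [Finset.sum_smul]
        rw [← Finset.sum_sub_distrib]
        exact Finset.sum_congr rfl fun i _ => by rw [smul_sub]
      rw [this, hW, zero_smul, sub_zero] at hv0
      exact hv0
    have := affineIndependent_iff.mp hind Finset.univ w (by simpa using hW) (by simpa using hlin)
    exact hwne (funext fun i => this i (Finset.mem_univ i))
  -- main computation
  set w : Fin m → ℝ := D⁻¹ *ᵥ (fun _ => 1) with hwdef
  have hDw : D *ᵥ w = (fun _ => (1 : ℝ)) := by
    rw [hwdef, Matrix.mulVec_mulVec, Matrix.mul_nonsing_inv D (isUnit_iff_ne_zero.mpr hdet),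
      Matrix.one_mulVec]
  obtain ⟨hsum, -⟩ := key w 1 hDw
  have hsum' : ∑ i, ∑ j, D⁻¹ i j = ∑ i, w i := by
    refine Finset.sum_congr rfl fun i _ => ?_
    rw [hwdef, Matrix.mulVec, dotProduct]
    exact Finset.sum_congr rfl fun j _ => by ring
  have hinf : Metric.infDist h (S : Set (EuclideanSpace ℝ (Fin n))) = d := by
    apply le_antisymm
    · exact Metric.infDist_le_dist_of_mem hqS
    · rw [Metric.infDist_eq_iInf]
      refine le_ciInf fun pp => ?_
      obtain ⟨p, hp⟩ := pp
      show d ≤ dist h p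
      have hqp : q - p ∈ S.direction := by
        have := AffineSubspace.vsub_mem_direction hqS hp
        simpa [vsub_eq_sub] using this
      have hcross : ⟪h - q, q - p⟫ = 0 :=
        (Submodule.mem_orthogonal' S.direction (h - q)).mp horth (q - p) hqp
      have hcross2 : ⟪q - p, h - q⟫ = 0 := by rw [real_inner_comm]; exact hcross
      have hsplit : h - p = (h - q) + (q - p) := by abel
      have hle : d ^ 2 ≤ dist h p ^ 2 := by
        rw [hd, dist_eq_norm, dist_eq_norm, ← real_inner_self_eq_norm_sq,
          ← real_inner_self_eq_norm_sq, hsplit, inner_add_add_self, hcross, hcross2]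
        have := real_inner_self_nonneg (x := q - p)
        linarith
      have hdnn : 0 ≤ d := by rw [hd]; exact dist_nonneg
      have h1 : d = Real.sqrt (d ^ 2) := (Real.sqrt_sq hdnn).symm
      have h2 : dist h p = Real.sqrt (dist h p ^ 2) := (Real.sqrt_sq dist_nonneg).symm
      rw [h1, h2]
      exact Real.sqrt_le_sqrt hle
  rw [hsum', hinf]
  have hne : n / 2 - 2 * d ^ 2 = 2 * r2 := by rw [hr2]; ring
  rw [hne]
  have : (∑ i, w i) = 1 / (2 * r2) := by
    field_simp at hsum ⊢
    linarith
  rw [this]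
  rw [one_div]
end

section
/- Let $X \subseteq H_n$ be an affinely independent subset with at least two points, with distance matrix $D$. Then $\frac{2}{n} \le \langle D^{-1}\mathbf{1}, \mathbf{1}\rangle \le 2$, i.e., the sum of all entries of $D^{-1}$ lies between $2/n$ and $2$. -/
open Finset

lemma aux_bounds_stmt10 {T r nn : ℝ} (h1 : T * (2*r^2) = 1) (h2 : 1 ≤ 2*r)
    (h3 : r^2 ≤ nn/4) (hn : 0 < nn) : 2/nn ≤ T ∧ T ≤ 2 := by
  have hr : 0 < r := by linarith
  have hTpos : 0 < T := by nlinarith [mul_pos hr hr]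
  constructor
  · rw [div_le_iff₀ hn]
    nlinarith
  · nlinarith [sq_nonneg (2*r-1)]

theorem stmt_10 {m n : ℕ} (hm : 2 ≤ m) (x : Fin m → EuclideanSpace ℝ (Fin n))
    (hx : ∀ i j, x i j = 0 ∨ x i j = 1)
    (hind : AffineIndependent ℝ x)
    (D : Matrix (Fin m) (Fin m) ℝ) (hD : ∀ i j, D i j = ∑ t, |x i t - x j t|) :
    2 / n ≤ ∑ i, ∑ j, D⁻¹ i j ∧ ∑ i, ∑ j, D⁻¹ i j ≤ 2 := by
  obtain ⟨k, rfl⟩ : ∃ k, m = k + 1 := ⟨m - 1, by omega⟩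
  have hinj := hind.injective
  have hk : 1 ≤ k := by omega
  set i0 : Fin (k+1) := ⟨0, by omega⟩ with hi0def
  set i1 : Fin (k+1) := ⟨1, by omega⟩ with hi1def
  have hi01 : i0 ≠ i1 := by simp [hi0def, hi1def, Fin.ext_iff]
  have hx01 : x i0 ≠ x i1 := fun h => hi01 (hinj h)
  have hn : 0 < n := by
    by_contra h
    exact hx01 (PiLp.ext fun t => absurd t.2 (by omega))
  have habs : ∀ i j t, |x i t - x j t| = (x i t - x j t)^2 := by
    intro i j t
    rcases hx i t with h1 | h1 <;> rcases hx j t with h2 | h2 <;>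
      rw [h1, h2] <;> norm_num
  have hDd : ∀ i j, D i j = dist (x i) (x j) ^ 2 := by
    intro i j
    rw [hD, EuclideanSpace.dist_eq, Real.sq_sqrt (by positivity)]
    exact Finset.sum_congr rfl fun t _ => by rw [habs, Real.dist_eq, sq_abs]
  have hDi : ∀ i j, D i j = ‖x i‖^2 - 2 * (inner ℝ (x i) (x j) : ℝ) + ‖x j‖^2 := by
    intro i j
    rw [hDd, dist_eq_norm, @norm_sub_sq_real]
  -- determinant nonzero
  have hdet : D.det ≠ 0 := by
    intro h0
    obtain ⟨v, hvne, hv⟩ := (Matrix.exists_mulVec_eq_zero_iff).2 h0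
    set σ := ∑ j, v j with hσdef
    set y := ∑ j, v j • x j with hydef
    set C := ∑ j, v j * ‖x j‖^2 with hCdef
    have hxy : ∀ i, (inner ℝ (x i) y : ℝ) = ∑ j, v j * (inner ℝ (x i) (x j) : ℝ) := by
      intro i
      rw [hydef, inner_sum]
      exact Finset.sum_congr rfl fun j _ => real_inner_smul_right _ _ _
    have hrow : ∀ i, σ * ‖x i‖^2 + C - 2 * (inner ℝ (x i) y : ℝ) = 0 := by
      intro i
      have h := congrFun hv i
      have h2 : ∑ j, D i j * v j = 0 := h
      have h3 : ∑ j, D i j * v j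
          = ‖x i‖^2 * σ + C - 2 * ∑ j, v j * (inner ℝ (x i) (x j) : ℝ) := by
        calc ∑ j, D i j * v j
            = ∑ j, (‖x i‖^2 * v j + v j * ‖x j‖^2 - 2 * (v j * (inner ℝ (x i) (x j) : ℝ))) :=
              Finset.sum_congr rfl fun j _ => by rw [hDi]; ring
          _ = ‖x i‖^2 * σ + C - 2 * ∑ j, v j * (inner ℝ (x i) (x j) : ℝ) := by
              rw [Finset.sum_sub_distrib, Finset.sum_add_distrib, ← Finset.mul_sum,
                ← Finset.mul_sum, hσdef, hCdef]
      rw [hxy]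
      linarith [h3.symm.trans h2]
    have hyin : (inner ℝ y y : ℝ) = ∑ i, v i * (inner ℝ (x i) y : ℝ) := by
      conv_lhs => rw [hydef]
      rw [sum_inner]
      exact Finset.sum_congr rfl fun i _ => real_inner_smul_left _ _ _
    have hyy : (inner ℝ y y : ℝ) = σ * C := by
      have h2 : ∑ i, v i * (σ * ‖x i‖^2 + C - 2 * (inner ℝ (x i) y : ℝ)) = 0 :=
        Finset.sum_eq_zero fun i _ => by rw [hrow i, mul_zero]
      have h3 : ∑ i, v i * (σ * ‖x i‖^2 + C - 2 * (inner ℝ (x i) y : ℝ))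
          = σ * C + C * σ - 2 * (inner ℝ y y : ℝ) := by
        calc ∑ i, v i * (σ * ‖x i‖^2 + C - 2 * (inner ℝ (x i) y : ℝ))
            = ∑ i, (σ * (v i * ‖x i‖^2) + C * v i - 2 * (v i * (inner ℝ (x i) y : ℝ))) :=
              Finset.sum_congr rfl fun i _ => by ring
          _ = σ * C + C * σ - 2 * (inner ℝ y y : ℝ) := by
              rw [Finset.sum_sub_distrib, Finset.sum_add_distrib, ← Finset.mul_sum,
                ← Finset.mul_sum, ← Finset.mul_sum, ← hCdef, ← hσdef, ← hyin]
      linarith [h3.symm.trans h2]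
    rcases eq_or_ne σ 0 with hσ | hσ
    · have hy0 : y = 0 := by
        have : (inner ℝ y y : ℝ) = 0 := by rw [hyy, hσ, zero_mul]
        exact inner_self_eq_zero.mp this
      have hws : Finset.univ.weightedVSub x v = (0 : EuclideanSpace ℝ (Fin n)) := by
        rw [Finset.weightedVSub_eq_linear_combination _ (hσdef ▸ hσ)]
        exact hydef ▸ hy0
      have hv0 := (affineIndependent_iff_of_fintype (k := ℝ) x).mp hind v (hσdef ▸ hσ) hws
      exact hvne (funext hv0)
    · have hall : ∀ i, σ • x i = y := by
        intro i
        have h4 := hrow i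
        have h5 : (inner ℝ y y : ℝ) = ‖y‖^2 := real_inner_self_eq_norm_sq y
        have hnorm : ‖σ • x i - y‖^2 = 0 := by
          rw [@norm_sub_sq_real, real_inner_smul_left, norm_smul, Real.norm_eq_abs,
            mul_pow, sq_abs]
          linear_combination σ * h4 + hyy - h5
        have h6 : σ • x i - y = 0 := by
          have h7 : ‖σ • x i - y‖ = 0 := by
            have := sq_eq_zero_iff.mp hnorm
            simpa using this
          exact norm_eq_zero.mp h7
        exact sub_eq_zero.mp h6
      exact hx01 (smul_right_injective _ hσ ((hall i0).trans (hall i1).symm))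
  have hU : IsUnit D.det := isUnit_iff_ne_zero.mpr hdet
  set S : Affine.Simplex ℝ (EuclideanSpace ℝ (Fin n)) k := ⟨x, hind⟩ with hSdef
  set c : EuclideanSpace ℝ (Fin n) := S.circumcenter with hcdef
  set r : ℝ := S.circumradius with hrdef
  have hdist : ∀ i, dist (x i) c = r := fun i => S.dist_circumcenter_eq_circumradius i
  obtain ⟨w, hw1, hwc⟩ :=
    eq_affineCombination_of_mem_affineSpan_of_fintype S.circumcenter_mem_affineSpan
  have hc : c = ∑ j, w j • x j := by
    rw [hcdef, hwc, Finset.affineCombination_eq_linear_combination _ _ _ hw1]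
  -- lower bound on r
  have hr1 : 1 ≤ dist (x i0) (x i1) := by
    have h2 : (1:ℝ) ≤ dist (x i0) (x i1)^2 := by
      rw [← hDd, hD]
      obtain ⟨t, ht⟩ : ∃ t, x i0 t ≠ x i1 t := by
        by_contra h; push_neg at h; exact hx01 (PiLp.ext h)
      have hone : (1:ℝ) = |x i0 t - x i1 t| := by
        rcases hx i0 t with h1|h1 <;> rcases hx i1 t with h2|h2 <;>
          [exact absurd (h1.trans h2.symm) ht; (rw [h1, h2]; norm_num); (rw [h1, h2]; norm_num);
            exact absurd (h1.trans h2.symm) ht]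
      calc (1:ℝ) = |x i0 t - x i1 t| := hone
        _ ≤ ∑ t, |x i0 t - x i1 t| :=
            Finset.single_le_sum (f := fun s => |x i0 s - x i1 s|)
              (fun _ _ => abs_nonneg _) (mem_univ t)
    nlinarith [dist_nonneg (x := x i0) (y := x i1)]
  have h2r : 1 ≤ 2 * r := by
    have htri := dist_triangle (x i0) c (x i1)
    have d1 := hdist i0
    have d2 := hdist i1
    rw [← dist_comm (x i1) c] at htri
    linarith
  have hrpos : 0 < r := by linarith
  -- upper bound on r
  have hrn : r^2 ≤ n/4 := by
    set p : EuclideanSpace ℝ (Fin n) := WithLp.toLp 2 (fun _ => 1/2) with hpdef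
    have hdp : ∀ i, dist (x i) p = Real.sqrt (n/4) := by
      intro i
      rw [EuclideanSpace.dist_eq]
      congr 1
      have hterm : ∀ t : Fin n, dist (x i t) (p t) ^ 2 = 1/4 := by
        intro t
        rcases hx i t with h1|h1 <;>
          rw [Real.dist_eq, h1] <;> norm_num [hpdef]
      rw [Finset.sum_congr rfl fun t _ => hterm t]
      simp [Finset.card_univ]
      ring
    have hproj : (↑(S.orthogonalProjectionSpan p) : EuclideanSpace ℝ (Fin n)) = c :=
      S.orthogonalProjection_eq_circumcenter_of_dist_eq hdp
    have hmem : x i0 ∈ affineSpan ℝ (Set.range S.points) :=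
      mem_affineSpan ℝ (Set.mem_range_self i0)
    have hpyth :=
      EuclideanGeometry.dist_sq_eq_dist_orthogonalProjection_sq_add_dist_orthogonalProjection_sq
        (s := affineSpan ℝ (Set.range S.points)) (p₁ := x i0) p hmem
    have hco : (↑(EuclideanGeometry.orthogonalProjection
        (affineSpan ℝ (Set.range S.points)) p) : EuclideanSpace ℝ (Fin n)) = c := hproj
    rw [hco] at hpyth
    have hd0 : dist (x i0) p * dist (x i0) p = n/4 := by
      rw [hdp]
      exact Real.mul_self_sqrt (by positivity)
    have hdc := hdist i0
    nlinarith [dist_nonneg (x := p) (y := c), hpyth, hd0]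
  -- the key linear identity
  have hCc : ∑ j, w j * ‖x j‖^2 - ‖c‖^2 = r^2 := by
    have h2 : (inner ℝ c c : ℝ) = ∑ j, w j * (inner ℝ (x j) c : ℝ) := by
      nth_rewrite 1 [hc]
      rw [sum_inner]
      exact Finset.sum_congr rfl fun j _ => real_inner_smul_left _ _ _
    have h3 : ∑ j, w j * (dist (x j) c ^2) = r^2 := by
      rw [Finset.sum_congr rfl fun j _ => by rw [hdist j]]
      rw [← Finset.sum_mul, hw1, one_mul]
    have h4 : ∑ j, w j * (dist (x j) c ^2)
        = ∑ j, w j * ‖x j‖^2 - 2 * (inner ℝ c c : ℝ) + ‖c‖^2 := by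
      calc ∑ j, w j * (dist (x j) c ^2)
          = ∑ j, (w j * ‖x j‖^2 - 2 * (w j * (inner ℝ (x j) c : ℝ)) + ‖c‖^2 * w j) :=
            Finset.sum_congr rfl fun j _ => by
              rw [dist_eq_norm, @norm_sub_sq_real]; ring
        _ = ∑ j, w j * ‖x j‖^2 - 2 * (inner ℝ c c : ℝ) + ‖c‖^2 := by
            rw [Finset.sum_add_distrib, Finset.sum_sub_distrib, ← Finset.mul_sum,
              ← Finset.mul_sum, ← h2, hw1, mul_one]
    have h5 : (inner ℝ c c : ℝ) = ‖c‖^2 := real_inner_self_eq_norm_sq c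
    linarith [h3.symm.trans h4]
  have hDw : D.mulVec w = fun _ => 2*r^2 := by
    funext i
    show ∑ j, D i j * w j = 2*r^2
    have hxc : (inner ℝ (x i) c : ℝ) = ∑ j, w j * (inner ℝ (x i) (x j) : ℝ) := by
      conv_lhs => rw [hc]
      rw [inner_sum]
      exact Finset.sum_congr rfl fun j _ => real_inner_smul_right _ _ _
    have hstep : ∑ j, D i j * w j
        = ‖x i‖^2 * 1 + (∑ j, w j * ‖x j‖^2) - 2 * (inner ℝ (x i) c : ℝ) := by
      calc ∑ j, D i j * w j
          = ∑ j, (‖x i‖^2 * w j + w j * ‖x j‖^2 - 2 * (w j * (inner ℝ (x i) (x j) : ℝ))) :=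
            Finset.sum_congr rfl fun j _ => by rw [hDi]; ring
        _ = ‖x i‖^2 * 1 + (∑ j, w j * ‖x j‖^2) - 2 * (inner ℝ (x i) c : ℝ) := by
            rw [Finset.sum_sub_distrib, Finset.sum_add_distrib, ← Finset.mul_sum,
              ← Finset.mul_sum, ← hxc, hw1]
    have hdi : dist (x i) c ^2 = ‖x i‖^2 - 2 * (inner ℝ (x i) c : ℝ) + ‖c‖^2 := by
      rw [dist_eq_norm, @norm_sub_sq_real]
    have hdr2 : dist (x i) c ^2 = r^2 := by rw [hdist i]
    rw [hstep]
    linarith [hCc, hdi, hdr2]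
  -- conclude
  have hw' : D⁻¹.mulVec (fun _ => 2*r^2) = w := by
    rw [← hDw, Matrix.mulVec_mulVec, Matrix.nonsing_inv_mul D hU, Matrix.one_mulVec]
  have hrowsum : ∀ i, (∑ j, D⁻¹ i j) * (2*r^2) = w i := by
    intro i
    have h := congrFun hw' i
    have h2 : ∑ j, D⁻¹ i j * (2*r^2) = w i := h
    rw [Finset.sum_mul]
    exact h2
  have htot : (∑ i, ∑ j, D⁻¹ i j) * (2*r^2) = 1 := by
    rw [Finset.sum_mul, Finset.sum_congr rfl fun i _ => hrowsum i, hw1]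
  have hnR : (0:ℝ) < n := by exact_mod_cast hn
  exact aux_bounds_stmt10 htot h2r hrn hnR
end

section
/- Let $X = \{x_1,\dots,x_m\}$ be a finite metric space with distance matrix $D$, admitting an S-embedding $\iota: X \to \mathbb{R}^n$ (i.e., $\|\iota(x)-\iota(y)\|_2^2 = d(x,y)$). Suppose $\iota(X)$ lies on a sphere of radius $r$ whose centre $c$ lies in the affine hull of $\iota(X)$, say $c = \sum_i \beta_i \iota(x_i)$ with $\sum_i \beta_i = 1$. Then for the measure $\mu = (\beta_1,\dots,\beta_m)$ and every $\alpha = (\alpha_1,\dots,\alpha_m)$ with $\sum_i \alpha_i = 1$, one has $\langle D\alpha, \alpha \rangle \le \langle D\mu, \mu\rangle = 2r^2$. -/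
open Finset RealInnerProductSpace

lemma key_17 {m n : ℕ} (v : Fin m → EuclideanSpace ℝ (Fin n))
    (c : EuclideanSpace ℝ (Fin n)) (r : ℝ) (hr : ∀ i, ‖v i - c‖ = r)
    (α : Fin m → ℝ) (hα : ∑ i, α i = 1) :
    ∑ i, ∑ j, α i * α j * ‖v i - v j‖ ^ 2
      = 2 * r ^ 2 - 2 * ‖(∑ i, α i • v i) - c‖ ^ 2 := by
  have h1 : (∑ i, α i • (v i - c)) = (∑ i, α i • v i) - c := by
    simp only [smul_sub, Finset.sum_sub_distrib, ← Finset.sum_smul, hα, one_smul]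
  have expand : (inner ℝ (∑ i, α i • (v i - c)) (∑ j, α j • (v j - c)) : ℝ) = ∑ i, ∑ j, α i * α j * (inner ℝ (v i - c) (v j - c) : ℝ) := by
    rw [sum_inner]
    refine Finset.sum_congr rfl fun i _ => ?_
    rw [inner_sum]
    refine Finset.sum_congr rfl fun j _ => ?_
    rw [real_inner_smul_left, real_inner_smul_right]; ring
  have hw : ∀ i j, ‖v i - v j‖ ^ 2
      = r ^ 2 + r ^ 2 - 2 * (inner ℝ (v i - c) (v j - c) : ℝ) := by
    intro i j
    have h : v i - v j = (v i - c) - (v j - c) := by abel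
    rw [h, norm_sub_sq_real, hr, hr]; ring
  have hnorm : ‖(∑ i, α i • v i) - c‖ ^ 2
      = ∑ i, ∑ j, α i * α j * (inner ℝ (v i - c) (v j - c) : ℝ) := by
    rw [← h1, ← expand, real_inner_self_eq_norm_sq]
  calc ∑ i, ∑ j, α i * α j * ‖v i - v j‖ ^ 2
      = ∑ i, ∑ j, (α i * α j * (2 * r ^ 2)
          - 2 * (α i * α j * (inner ℝ (v i - c) (v j - c) : ℝ))) := by
        refine Finset.sum_congr rfl fun i _ => Finset.sum_congr rfl fun j _ => ?_
        rw [hw i j]; ring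
    _ = 2 * r ^ 2 - 2 * ‖(∑ i, α i • v i) - c‖ ^ 2 := by
        simp only [Finset.sum_sub_distrib, ← Finset.mul_sum, ← Finset.sum_mul, hα, hnorm]
        ring

theorem stmt_17 {m n : ℕ} {X : Type*} [MetricSpace X] [Fintype X]
    (ι : X → EuclideanSpace ℝ (Fin n))
    (hι : ∀ a b : X, ‖ι a - ι b‖ ^ 2 = dist a b)
    (x : Fin m → X) (β : Fin m → ℝ) (hβ : ∑ i, β i = 1)
    (r : ℝ) (hr : ∀ i, ‖ι (x i) - ∑ j, β j • ι (x j)‖ = r)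
    (α : Fin m → ℝ) (hα : ∑ i, α i = 1) :
    ∑ i, ∑ j, α i * α j * dist (x i) (x j) ≤
        ∑ i, ∑ j, β i * β j * dist (x i) (x j) ∧
      ∑ i, ∑ j, β i * β j * dist (x i) (x j) = 2 * r ^ 2 := by
  set v : Fin m → EuclideanSpace ℝ (Fin n) := fun i => ι (x i) with hv
  set c : EuclideanSpace ℝ (Fin n) := ∑ j, β j • ι (x j) with hc
  have hd : ∀ i j, dist (x i) (x j) = ‖v i - v j‖ ^ 2 := fun i j => (hι _ _).symm
  have hrw : ∀ γ : Fin m → ℝ, ∑ i, ∑ j, γ i * γ j * dist (x i) (x j)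
      = ∑ i, ∑ j, γ i * γ j * ‖v i - v j‖ ^ 2 := by
    intro γ
    refine Finset.sum_congr rfl fun i _ => Finset.sum_congr rfl fun j _ => ?_
    rw [hd]
  have hkα := key_17 v c r hr α hα
  have hkβ := key_17 v c r hr β hβ
  have hcv : (∑ i, β i • v i) = c := rfl
  rw [hcv, sub_self, norm_zero] at hkβ
  constructor
  · rw [hrw α, hrw β, hkα, hkβ]
    have := sq_nonneg ‖(∑ i, α i • v i) - c‖
    nlinarith
  · rw [hrw β, hkβ]; ring
end

section
/- Let $X = \{x_1,\dots,x_m\}$ be an affinely independent subset of $H_n$ with $m \ge 2$, and $D$ its distance matrix. Then $\langle D^{-1}\mathbf{1},\mathbf{1}\rangle = (2r^2)^{-1}$, where $r$ is the radius of the unique sphere containing $X$ whose centre lies in the affine hull of $X$ (equivalently, the smallest Euclidean sphere containing all points of $X$). -/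
open Finset
open scoped InnerProductSpace

theorem stmt_19 {m n : ℕ} (hm : 2 ≤ m) (x : Fin m → EuclideanSpace ℝ (Fin n))
    (hx : ∀ i j, x i j = 0 ∨ x i j = 1)
    (hind : AffineIndependent ℝ x)
    (D : Matrix (Fin m) (Fin m) ℝ) (hD : ∀ i j, D i j = ∑ t, |x i t - x j t|)
    (c : EuclideanSpace ℝ (Fin n)) (r : ℝ)
    (hc : c ∈ affineSpan ℝ (Set.range x))
    (hr : ∀ i, ‖x i - c‖ = r) :
    ∑ i, ∑ j, D⁻¹ i j = (2 * r ^ 2)⁻¹ := by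
  classical
  have i0 : Fin m := ⟨0, by omega⟩
  have i1 : Fin m := ⟨1, by omega⟩
  -- r ≠ 0
  have hrne : r ≠ 0 := by
    intro h
    have h0 : x ⟨0, by omega⟩ = c := by
      have := hr ⟨0, by omega⟩; rw [h, norm_eq_zero, sub_eq_zero] at this; exact this
    have h1 : x ⟨1, by omega⟩ = c := by
      have := hr ⟨1, by omega⟩; rw [h, norm_eq_zero, sub_eq_zero] at this; exact this
    have : (⟨0, by omega⟩ : Fin m) = ⟨1, by omega⟩ :=
      hind.injective (h0.trans h1.symm)
    simp [Fin.ext_iff] at this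
  have h2r : (2 * r ^ 2) ≠ 0 := by positivity
  set y : Fin m → EuclideanSpace ℝ (Fin n) := fun i => x i - c with hy
  have hyr : ∀ i, ⟪y i, y i⟫_ℝ = r ^ 2 := by
    intro i
    rw [real_inner_self_eq_norm_sq, hy]
    simp [hr i]
  -- D in terms of inner products
  have hD2 : ∀ i j, D i j = 2 * r ^ 2 - 2 * ⟪y i, y j⟫_ℝ := by
    intro i j
    have h1 : D i j = ∑ t, (x i t - x j t) ^ 2 := by
      rw [hD]
      refine Finset.sum_congr rfl fun t _ => ?_
      rcases hx i t with h | h <;> rcases hx j t with h' | h' <;>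
        rw [h, h'] <;> norm_num
    have h2 : (∑ t, (x i t - x j t) ^ 2) = ⟪x i - x j, x i - x j⟫_ℝ := by
      rw [PiLp.inner_apply]
      refine Finset.sum_congr rfl fun t _ => ?_
      simp [sq]
    have h3 : x i - x j = y i - y j := by rw [hy]; simp
    rw [h1, h2, h3, inner_sub_sub_self, hyr i, hyr j, real_inner_comm]
    ring
  -- weights for c
  obtain ⟨w, hw1, hcw⟩ := eq_affineCombination_of_mem_affineSpan_of_fintype hc
  have hcw' : c = ∑ j, w j • x j := by
    rw [hcw, Finset.affineCombination_eq_linear_combination _ _ _ hw1]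
  have hw0 : ∑ j, w j • y j = 0 := by
    rw [hy]
    simp only [smul_sub]
    rw [Finset.sum_sub_distrib, ← hcw', ← Finset.sum_smul, hw1, one_smul, sub_self]
  have hDw : ∀ i, ∑ j, D i j * w j = 2 * r ^ 2 := by
    intro i
    have : ∑ j, D i j * w j
        = (2 * r ^ 2) * (∑ j, w j) - 2 * ⟪y i, ∑ j, w j • y j⟫_ℝ := by
      rw [inner_sum]
      simp only [real_inner_smul_right]
      rw [Finset.mul_sum, Finset.mul_sum, ← Finset.sum_sub_distrib]
      refine Finset.sum_congr rfl fun j _ => ?_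
      rw [hD2 i j]; ring
    rw [this, hw1, hw0, inner_zero_right]; ring
  -- D is invertible
  have hker : ∀ v : Fin m → ℝ, D.mulVec v = 0 → v = 0 := by
    intro v hv
    have hvi : ∀ i, ⟪y i, ∑ j, v j • y j⟫_ℝ = r ^ 2 * (∑ j, v j) := by
      intro i
      have h0 : ∑ j, D i j * v j = 0 := by
        have := congrFun hv i
        simpa [Matrix.mulVec, dotProduct] using this
      have : ∑ j, D i j * v j
          = (2 * r ^ 2) * (∑ j, v j) - 2 * ⟪y i, ∑ j, v j • y j⟫_ℝ := by
        rw [inner_sum]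
        simp only [real_inner_smul_right]
        rw [Finset.mul_sum, Finset.mul_sum, ← Finset.sum_sub_distrib]
        refine Finset.sum_congr rfl fun j _ => ?_
        rw [hD2 i j]; ring
      rw [this] at h0
      linarith
    set u : EuclideanSpace ℝ (Fin n) := ∑ j, v j • y j with hu
    have hs0 : ∑ j, v j = 0 := by
      have h1 : ⟪∑ j, w j • y j, u⟫_ℝ = r ^ 2 * (∑ j, v j) := by
        rw [sum_inner]
        simp only [real_inner_smul_left]
        calc (∑ j, w j * ⟪y j, u⟫_ℝ) = ∑ j, w j * (r ^ 2 * (∑ k, v k)) := by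
              refine Finset.sum_congr rfl fun j _ => by rw [hvi j]
          _ = (∑ j, w j) * (r ^ 2 * (∑ k, v k)) := by rw [← Finset.sum_mul]
          _ = r ^ 2 * (∑ j, v j) := by rw [hw1]; ring
      rw [hw0, inner_zero_left] at h1
      have hr2 : r ^ 2 ≠ 0 := pow_ne_zero _ hrne
      have := h1.symm
      rcases mul_eq_zero.mp this with h | h
      · exact absurd h hr2
      · exact h
    have hu0 : u = 0 := by
      have h2 : ⟪u, u⟫_ℝ = 0 := by
        rw [hu]
        rw [sum_inner]
        simp only [real_inner_smul_left]
        calc (∑ j, v j * ⟪y j, ∑ k, v k • y k⟫_ℝ)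
            = ∑ j, v j * (r ^ 2 * (∑ k, v k)) := by
              refine Finset.sum_congr rfl fun j _ => by rw [hvi j]
          _ = (∑ j, v j) * (r ^ 2 * (∑ k, v k)) := by rw [← Finset.sum_mul]
          _ = 0 := by rw [hs0]; ring
      exact inner_self_eq_zero.mp h2
    -- affine independence kills v
    have hx0 : ∑ j, v j • x j = 0 := by
      have : ∑ j, v j • x j = (∑ j, v j • y j) + (∑ j, v j) • c := by
        rw [hy, Finset.sum_smul]
        simp only [smul_sub]
        rw [Finset.sum_sub_distrib]
        abel
      rw [this, ← hu, hu0, hs0, zero_smul, add_zero]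
    funext i
    exact affineIndependent_iff.mp hind Finset.univ v hs0 hx0 i (Finset.mem_univ i)
  have hinj : Function.Injective D.mulVec := by
    intro a b hab
    have : D.mulVec (a - b) = 0 := by
      rw [Matrix.mulVec_sub, hab, sub_self]
    have := hker _ this
    exact sub_eq_zero.mp this
  have hU : IsUnit D := Matrix.mulVec_injective_iff_isUnit.mp hinj
  have hdet : IsUnit D.det := (Matrix.isUnit_iff_isUnit_det D).mp hU
  -- solve
  have hDw' : D.mulVec w = fun _ => 2 * r ^ 2 := by
    funext i
    simpa [Matrix.mulVec, dotProduct] using hDw i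
  have key : w = (2 * r ^ 2) • D⁻¹.mulVec (fun _ => 1) := by
    have h1 : D⁻¹.mulVec (D.mulVec w) = w := by
      rw [Matrix.mulVec_mulVec, Matrix.nonsing_inv_mul D hdet, Matrix.one_mulVec]
    rw [← h1, hDw']
    have h2 : (fun _ : Fin m => 2 * r ^ 2) = (2 * r ^ 2) • (fun _ : Fin m => (1 : ℝ)) := by
      funext i; simp
    rw [h2, Matrix.mulVec_smul]
  have hsum : ∑ i, (D⁻¹.mulVec (fun _ => 1)) i = (2 * r ^ 2)⁻¹ := by
    have := congrArg (fun f => ∑ i, f i) key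
    simp only [Pi.smul_apply, smul_eq_mul, ← Finset.mul_sum] at this
    rw [hw1] at this
    field_simp at this ⊢
    linarith [this]
  calc (∑ i, ∑ j, D⁻¹ i j) = ∑ i, (D⁻¹.mulVec (fun _ => 1)) i := by
        refine Finset.sum_congr rfl fun i _ => ?_
        simp [Matrix.mulVec, dotProduct]
    _ = (2 * r ^ 2)⁻¹ := hsum
end
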